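/- If a permutation-induced Change-of-Order mapping f : Mat_n(ℝ) → Mat_n(ℝ) restricts to a monoid isomorphism from Adj(G) onto Adj(H), where Adj(·) is the submonoid generated by the single-column neighborhood matrices, then the graphs G and H are isomorphic. -/

import Mathlib

open Matrix

namespace GGNN

open scoped Classical

variable {V : Type*} (G : SimpleGraph V)

/-- The operation `A ∘ B = A + B + A·B` on matrices. -/
def op [Fintype V] (A B : Matrix V V ℝ) : Matrix V V ℝ := A + B + A * B

/-- The single-column neighborhood matrix of a node `v`: its `v`-th column is
the `v`-th column of the adjacency matrix of `G` and all other columns are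
zero. -/
noncomputable def Adjv [Fintype V] (v : V) : Matrix V V ℝ :=
  Matrix.of fun i j => if j = v ∧ G.Adj i j then 1 else 0

/-- The submonoid-as-a-set generated by `A` under the binary operation `o`
with identity `e`: all finite `o`-products of elements of `A`. -/
def GenBy {α : Type*} (A : Set α) (o : α → α → α) (e : α) : Set α :=
  {x | ∃ l : List α, (∀ a ∈ l, a ∈ A) ∧ l.foldr o e = x}

/-- `Adj(G)`: the submonoid of `(Mat_n(ℝ), ∘)` generated by the single-column
neighborhood matrices of `G`. -/
noncomputable def AdjMon [Fintype V] : Set (Matrix V V ℝ) :=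
  GenBy (Set.range (Adjv G)) op 0

/-- The permutation matrix of a permutation `σ` of the vertices. -/
def permMat [DecidableEq V] (σ : Equiv.Perm V) : Matrix V V ℝ :=
  Matrix.of fun i j => if i = σ j then 1 else 0

lemma adjv_nonneg [Fintype V] (v i j : V) : 0 ≤ Adjv G v i j := by
  simp only [Adjv, Matrix.of_apply]
  split_ifs <;> norm_num

lemma foldr_nonneg [Fintype V] :
    ∀ l : List (Matrix V V ℝ), (∀ a ∈ l, a ∈ Set.range (Adjv G)) →
      ∀ i j, 0 ≤ (l.foldr op 0) i j := by
  intro l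
  induction l with
  | nil => intro _ i j; simp
  | cons a l ih =>
    intro hl i j
    obtain ⟨v, hv⟩ := hl a List.mem_cons_self
    have hB : ∀ i j, 0 ≤ (l.foldr op 0) i j :=
      ih (fun b hb => hl b (List.mem_cons_of_mem _ hb))
    have ha : ∀ i j, 0 ≤ a i j := fun i j => hv ▸ adjv_nonneg G v i j
    show 0 ≤ (op a (l.foldr op 0)) i j
    simp only [op, Matrix.add_apply, Matrix.mul_apply]
    have hs : 0 ≤ ∑ k, a i k * (l.foldr op 0) k j :=
      Finset.sum_nonneg fun k _ => mul_nonneg (ha i k) (hB k j)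
    have := ha i j
    have := hB i j
    linarith

lemma le_foldr [Fintype V] :
    ∀ l : List (Matrix V V ℝ), (∀ a ∈ l, a ∈ Set.range (Adjv G)) →
      ∀ a ∈ l, ∀ i j, a i j ≤ (l.foldr op 0) i j := by
  intro l
  induction l with
  | nil => intro _ a ha; simp at ha
  | cons b l ih =>
    intro hl a ha i j
    obtain ⟨v, hv⟩ := hl b List.mem_cons_self
    have hb : ∀ i j, 0 ≤ b i j := fun i j => hv ▸ adjv_nonneg G v i j
    have hB : ∀ i j, 0 ≤ (l.foldr op 0) i j :=
      foldr_nonneg G l (fun c hc => hl c (List.mem_cons_of_mem _ hc))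
    have hs : 0 ≤ ∑ k, b i k * (l.foldr op 0) k j :=
      Finset.sum_nonneg fun k _ => mul_nonneg (hb i k) (hB k j)
    show a i j ≤ (op b (l.foldr op 0)) i j
    simp only [op, Matrix.add_apply, Matrix.mul_apply]
    rcases List.mem_cons.mp ha with rfl | ha'
    · have := hB i j; linarith
    · have := ih (fun c hc => hl c (List.mem_cons_of_mem _ hc)) a ha' i j
      have := hb i j
      linarith

lemma adjv_mul_self [Fintype V] (j : V) : Adjv G j * Adjv G j = 0 := by
  ext i k
  simp only [Matrix.mul_apply, Adjv, Matrix.of_apply, Matrix.zero_apply]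
  apply Finset.sum_eq_zero
  intro m _
  by_cases h1 : m = j ∧ G.Adj i m
  · by_cases h2 : k = j ∧ G.Adj m k
    · exfalso
      obtain ⟨rfl, -⟩ := h1
      obtain ⟨rfl, hadj⟩ := h2
      exact G.irrefl hadj
    · simp [h2]
  · simp [h1]

lemma foldr_smul [Fintype V] (j : V) :
    ∀ l : List (Matrix V V ℝ), (∀ a ∈ l, a = 0 ∨ a = Adjv G j) →
      ∃ c : ℝ, l.foldr op 0 = c • Adjv G j := by
  intro l
  induction l with
  | nil => intro _; exact ⟨0, by simp⟩
  | cons a l ih =>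
    intro hl
    obtain ⟨c, hc⟩ := ih (fun b hb => hl b (List.mem_cons_of_mem _ hb))
    rcases hl a List.mem_cons_self with rfl | rfl
    · exact ⟨c, by simp [op, hc]⟩
    · refine ⟨1 + c, ?_⟩
      show op (Adjv G j) (l.foldr op 0) = (1 + c) • Adjv G j
      rw [hc]
      simp only [op, mul_smul_comm, adjv_mul_self, smul_zero, add_zero, add_smul, one_smul]

lemma key_adj [Fintype V] {A : Matrix V V ℝ} (hA : A ∈ AdjMon G) {i j : V}
    (hcol : ∀ i' k, k ≠ j → A i' k = 0) (hij : A i j ≠ 0) : G.Adj i j := by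
  obtain ⟨l, hl, rfl⟩ := hA
  have hall : ∀ a ∈ l, a = 0 ∨ a = Adjv G j := by
    intro a ha
    obtain ⟨v, rfl⟩ := hl a ha
    by_cases hv : v = j
    · right; rw [hv]
    · left
      ext i' k
      by_cases hk : k = v
      · subst hk
        have h1 := le_foldr G l hl _ ha i' k
        have h2 := hcol i' k hv
        have h3 := adjv_nonneg G k i' k
        rw [h2] at h1
        simpa using le_antisymm h1 h3
      · simp [Adjv, hk]
  obtain ⟨c, hc⟩ := foldr_smul G j l hall
  rw [hc] at hij
  by_contra hadj
  simp [Matrix.smul_apply, Adjv, hadj] at hij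

lemma adjv_mem [Fintype V] (j : V) : Adjv G j ∈ AdjMon G := by
  refine ⟨[Adjv G j], ?_, ?_⟩
  · intro a ha
    rw [List.mem_singleton] at ha
    exact ⟨j, ha.symm⟩
  · simp [op]

lemma conj_apply [Fintype V] [DecidableEq V] (σ : Equiv.Perm V) (A : Matrix V V ℝ) (i j : V) :
    (permMat σ * A * (permMat σ)ᵀ) i j = A (σ.symm i) (σ.symm j) := by
  have h1 : ∀ m, (permMat σ * A) i m = A (σ.symm i) m := by
    intro m
    simp only [Matrix.mul_apply, permMat, Matrix.of_apply]
    rw [Finset.sum_eq_single (σ.symm i)]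
    · simp
    · intro k _ hk
      rw [if_neg, zero_mul]
      intro hik
      exact hk (by rw [hik, Equiv.symm_apply_apply])
    · simp
  rw [Matrix.mul_apply]
  rw [Finset.sum_eq_single (σ.symm j)]
  · rw [h1]
    simp [permMat, Matrix.transpose_apply]
  · intro m _ hm
    have hz : (permMat σ)ᵀ m j = 0 := by
      simp only [Matrix.transpose_apply, permMat, Matrix.of_apply]
      rw [if_neg]
      intro hjm
      exact hm (by rw [hjm, Equiv.symm_apply_apply])
    rw [hz, mul_zero]
  · simp

/-- If a Change-of-Order mapping `A ↦ P A Pᵀ` restricts to a monoid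
isomorphism from `Adj(G)` onto `Adj(H)`, then `G` and `H` are isomorphic. -/
theorem iso_of_changeOfOrder_adjMon_iso [Fintype V] [DecidableEq V]
    (H : SimpleGraph V) (σ : Equiv.Perm V)
    (h : (fun A => permMat σ * A * (permMat σ)ᵀ) '' AdjMon G = AdjMon H) :
    Nonempty (G ≃g H) := by
  refine ⟨⟨σ, ?_⟩⟩
  intro a b
  show H.Adj (σ a) (σ b) ↔ G.Adj a b
  constructor
  · intro hH
    have hBmem : Adjv H (σ b) ∈ AdjMon H := adjv_mem H (σ b)
    rw [← h] at hBmem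
    obtain ⟨A, hAmem, hfA⟩ := hBmem
    have hAeq : ∀ x y : V, A x y = Adjv H (σ b) (σ x) (σ y) := by
      intro x y
      rw [← hfA]
      simp only
      rw [conj_apply]
      simp
    refine key_adj G hAmem (i := a) (j := b) ?_ ?_
    · intro i' k hk
      rw [hAeq]
      have : σ k ≠ σ b := fun hc => hk (σ.injective hc)
      simp [Adjv, this]
    · rw [hAeq]
      simp [Adjv, hH]
  · intro hG
    have hAmem : Adjv G b ∈ AdjMon G := adjv_mem G b
    have hfmem : permMat σ * Adjv G b * (permMat σ)ᵀ ∈ AdjMon H := by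
      rw [← h]
      exact ⟨Adjv G b, hAmem, rfl⟩
    refine key_adj H hfmem (i := σ a) (j := σ b) ?_ ?_
    · intro i' k hk
      rw [conj_apply]
      have : σ.symm k ≠ b := fun hc => hk (by rw [← hc]; simp)
      simp [Adjv, this]
    · rw [conj_apply]
      simp [Adjv, hG]

end GGNN
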